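/- arXiv:2603.26129 — 6 statements merged into one kernel-verified Lean document; each statement's English description precedes it below -/
import Mathlib

section
/- For every schedule of the n tasks on the m crowd workers, the total weighted completion time satisfies Σ_{j=1}^n w_j C_j ≥ (1/m)·Σ_{j=1}^n w_j Σ_{k=1}^{j} p_k + ((m-1)/(2m))·Σ_{j=1}^n w_j p_j + 2·φ_min·Σ_{j=1}^n w_j. In particular, the optimal total weighted completion time WCT_OPT is at least (1/m)·M_1 + ((m-1)/(2m))·M_n + 2·φ_min·Σ_{j=1}^n w_j, where M_1 = Σ_{j=1}^n w_j Σ_{k=1}^{j} p_k and M_n = Σ_{j=1}^n w_j p_j. -/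
open Finset

lemma telescope_Ico (f : ℕ → ℝ) (a b : ℕ) (h : a ≤ b) :
    ∑ t ∈ Finset.Ico a b, (f t - f (t+1)) = f a - f b := by
  induction b, h using Nat.le_induction with
  | base => simp
  | succ b hab ih => rw [Finset.sum_Ico_succ_top hab, ih]; ring

lemma sq_sum_le (m : ℕ) (g : Fin m → ℝ) : (∑ i, g i)^2 ≤ m * ∑ i, (g i)^2 := by
  have := Finset.sum_mul_sq_le_sq_mul_sq univ (fun _ => (1:ℝ)) g
  simpa using this

lemma key_lemma (n m : ℕ) (p : Fin n → ℝ) (ρ : Fin n → ℝ)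
    (hρ0 : ∀ j, 0 ≤ ρ j) (hρ : ∀ j k : Fin n, j ≤ k → ρ k ≤ ρ j)
    (σ : Fin n → Fin m) :
    ∑ j, ∑ k, ρ (max j k) * (p j * p k)
      ≤ m * ∑ j, ∑ k ∈ univ.filter (fun k => σ k = σ j), ρ (max j k) * (p j * p k) := by
  classical
  set ρ' : ℕ → ℝ := fun t => if h : t < n then ρ ⟨t, h⟩ else 0 with hρ'def
  set d : ℕ → ℝ := fun t => ρ' t - ρ' (t+1) with hddef
  have hd0 : ∀ t, 0 ≤ d t := by
    intro t
    simp only [hddef, hρ'def, sub_nonneg]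
    split_ifs with h1 h2
    · exact hρ ⟨t, h2⟩ ⟨t+1, h1⟩ (Nat.le_succ t)
    · exact absurd (Nat.lt_of_succ_lt h1) h2
    · exact hρ0 _
    · exact le_refl 0
  have hrep : ∀ j : Fin n, ρ j = ∑ t ∈ Finset.Ico j.1 n, d t := by
    intro j
    have h := telescope_Ico ρ' j.1 n j.2.le
    have h1 : ρ' j.1 = ρ j := by simp [hρ'def, j.2]
    have h2 : ρ' n = 0 := by simp [hρ'def]
    rw [h1, h2, sub_zero] at h
    exact h.symm
  have hmax : ∀ j k : Fin n, (max j k).1 = max j.1 k.1 := by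
    intro j k
    rcases le_total j k with h | h
    · rw [max_eq_right h, max_eq_right (Fin.le_def.mp h)]
    · rw [max_eq_left h, max_eq_left (Fin.le_def.mp h)]
  have htrans : ∀ S : Fin n → Finset (Fin n),
      ∑ j, ∑ k ∈ S j, ρ (max j k) * (p j * p k)
      = ∑ t ∈ Finset.range n, d t *
          (∑ j, ∑ k ∈ S j, (if j.1 ≤ t then p j else 0) * (if k.1 ≤ t then p k else 0)) := by
    intro S
    have step1 : ∀ j k : Fin n, ρ (max j k) * (p j * p k)
        = ∑ t ∈ Finset.range n, d t * ((if j.1 ≤ t then p j else 0) * (if k.1 ≤ t then p k else 0)) := by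
      intro j k
      rw [hrep (max j k), Finset.sum_mul]
      have hIco : Finset.Ico (max j k).1 n = (Finset.range n).filter (fun t => (max j k).1 ≤ t) := by
        ext t; simp [Finset.mem_Ico, Finset.mem_filter, and_comm]
      rw [hIco, Finset.sum_filter]
      refine Finset.sum_congr rfl fun t _ => ?_
      rw [hmax]
      by_cases hj : j.1 ≤ t <;> by_cases hk : k.1 ≤ t <;>
        simp [hj, hk, max_le_iff]
    calc ∑ j, ∑ k ∈ S j, ρ (max j k) * (p j * p k)
        = ∑ j, ∑ k ∈ S j, ∑ t ∈ Finset.range n,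
            d t * ((if j.1 ≤ t then p j else 0) * (if k.1 ≤ t then p k else 0)) := by
          refine Finset.sum_congr rfl fun j _ => Finset.sum_congr rfl fun k _ => step1 j k
      _ = ∑ t ∈ Finset.range n, ∑ j, ∑ k ∈ S j,
            d t * ((if j.1 ≤ t then p j else 0) * (if k.1 ≤ t then p k else 0)) := by
          rw [Finset.sum_comm]
          refine Finset.sum_congr rfl fun t _ => ?_
          exact Finset.sum_comm
      _ = ∑ t ∈ Finset.range n, d t *
            (∑ j, ∑ k ∈ S j, (if j.1 ≤ t then p j else 0) * (if k.1 ≤ t then p k else 0)) := by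
          refine Finset.sum_congr rfl fun t _ => ?_
          rw [Finset.mul_sum]
          refine Finset.sum_congr rfl fun j _ => ?_
          rw [Finset.mul_sum]
  rw [htrans (fun _ => univ), htrans (fun j => univ.filter (fun k => σ k = σ j)),
    Finset.mul_sum]
  refine Finset.sum_le_sum fun t _ => ?_
  rw [← mul_assoc, mul_comm ((m:ℝ)) (d t), mul_assoc]
  refine mul_le_mul_of_nonneg_left ?_ (hd0 t)
  set F : Fin n → ℝ := fun j => if j.1 ≤ t then p j else 0 with hF
  -- full double sum equals square of total
  have hfull : ∑ j, ∑ k : Fin n, F j * F k = (∑ j, F j)^2 := by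
    rw [sq, Finset.sum_mul_sum]
  -- fiber decomposition
  have hσsum : ∑ j, ∑ k ∈ univ.filter (fun k => σ k = σ j), F j * F k
      = ∑ i : Fin m, (∑ j ∈ univ.filter (fun j => σ j = i), F j)^2 := by
    rw [← Finset.sum_fiberwise univ σ (fun j => ∑ k ∈ univ.filter (fun k => σ k = σ j), F j * F k)]
    refine Finset.sum_congr rfl fun i _ => ?_
    rw [sq, Finset.sum_mul]
    refine Finset.sum_congr rfl fun j hj => ?_
    rw [Finset.mem_filter] at hj
    rw [← Finset.mul_sum]
    congr 1
    refine Finset.sum_congr ?_ fun k _ => rfl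
    ext k; simp [hj.2]
  have htot : ∑ j, F j = ∑ i : Fin m, ∑ j ∈ univ.filter (fun j => σ j = i), F j :=
    (Finset.sum_fiberwise univ σ F).symm
  rw [hfull, hσsum, htot]
  exact sq_sum_le m _



/-- Lower bound on the total weighted completion time of any schedule of `n` tasks on
`m` identical crowd workers.  A schedule is given by an assignment `σ` of tasks to workers
together with a global priority permutation `π` (inducing the processing order of each
worker's tasks); the completion time of task `j` is
`C j = 2 * φ (σ j) + ∑_{k : σ k = σ j, π k ≤ π j} p k`.
Tasks are indexed in non-increasing order of their Smith ratios `w j / p j`.  Then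
`∑ j, w j * C j ≥ (1/m) * ∑ j, w j * ∑_{k ≤ j} p k + ((m-1)/(2m)) * ∑ j, w j * p j
  + 2 * φ_min * ∑ j, w j`. -/
theorem wct_lower_bound (n m : ℕ) (hm : 1 ≤ m)
    (w p : Fin n → ℝ) (φ : Fin m → ℝ)
    (hw : ∀ j, 0 ≤ w j) (hp : ∀ j, 0 < p j) (hφ : ∀ i, 0 < φ i)
    (hsmith : ∀ j k : Fin n, j ≤ k → w k / p k ≤ w j / p j)
    (σ : Fin n → Fin m) (π : Equiv.Perm (Fin n)) :
    (1 / (m : ℝ)) * ∑ j, w j * ∑ k ∈ univ.filter (fun k => k ≤ j), p k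
      + (((m : ℝ) - 1) / (2 * (m : ℝ))) * ∑ j, w j * p j
      + 2 * (⨅ i, φ i) * ∑ j, w j
    ≤ ∑ j, w j *
        (2 * φ (σ j) + ∑ k ∈ univ.filter (fun k => σ k = σ j ∧ π k ≤ π j), p k) := by
  classical
  have hM : (0:ℝ) < (m:ℝ) := by exact_mod_cast hm
  set ρ : Fin n → ℝ := fun j => w j / p j with hρdef
  have hwρ : ∀ j, w j = ρ j * p j := fun j => (div_mul_cancel₀ (w j) (hp j).ne').symm
  set a : Fin n → Fin n → ℝ := fun j k => ρ (max j k) * (p j * p k) with hadef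
  -- a j k = w (max j k) * p (min j k)
  have ha : ∀ j k, a j k = w (max j k) * p (min j k) := by
    intro j k
    rcases le_total j k with h | h
    · rw [hadef]; simp only [max_eq_right h, min_eq_left h, hρdef]
      have hk : p k ≠ 0 := (hp k).ne'
      field_simp
    · rw [hadef]; simp only [max_eq_left h, min_eq_right h, hρdef]
      have hj : p j ≠ 0 := (hp j).ne'
      field_simp
  have hsm : ∀ j k : Fin n, j ≤ k → w k * p j ≤ w j * p k := by
    intro j k h
    have := hsmith j k h
    rw [div_le_div_iff₀ (hp k) (hp j)] at this
    linarith
  set W' : ℝ := ∑ j, w j * p j with hW'def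
  set SP : ℝ := ∑ j, w j * ∑ k ∈ univ.filter (fun k => k ≤ j), p k with hSPdef
  set T : ℝ := ∑ j, w j * ∑ k ∈ univ.filter (fun k => σ k = σ j ∧ π k ≤ π j), p k with hTdef
  set Q1 : ℝ := ∑ j, ∑ k, a j k with hQ1def
  set Q2 : ℝ := ∑ j, ∑ k ∈ univ.filter (fun k => σ k = σ j), a j k with hQ2def
  -- Claim 2 : Q1 = 2*SP - W'
  have claim2 : Q1 = 2 * SP - W' := by
    have point : ∀ j k : Fin n, a j k
        = (if k ≤ j then w j * p k else 0) + (if j ≤ k then w k * p j else 0)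
          - (if j = k then w j * p j else 0) := by
      intro j k
      rcases lt_trichotomy j k with h | h | h
      · rw [ha, max_eq_right h.le, min_eq_left h.le,
          if_neg (not_le.mpr h), if_pos h.le, if_neg h.ne]
        ring
      · subst h
        rw [ha]; simp
      · rw [ha, max_eq_left h.le, min_eq_right h.le,
          if_pos h.le, if_neg (not_le.mpr h), if_neg h.ne']
        ring
    have e1 : ∀ j : Fin n, (∑ k, (if k ≤ j then w j * p k else 0))
        = w j * ∑ k ∈ univ.filter (fun k => k ≤ j), p k := by
      intro j
      rw [Finset.mul_sum, Finset.sum_filter]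
    have e2 : (∑ j, ∑ k, (if j ≤ k then w k * p j else 0)) = SP := by
      rw [Finset.sum_comm, hSPdef]
      refine Finset.sum_congr rfl fun k _ => ?_
      rw [Finset.mul_sum, Finset.sum_filter]
    have e3 : (∑ j : Fin n, ∑ k : Fin n, (if j = k then w j * p j else 0)) = W' := by
      rw [hW'def]
      refine Finset.sum_congr rfl fun j _ => ?_
      simp
    calc Q1 = ∑ j, ∑ k, ((if k ≤ j then w j * p k else 0) + (if j ≤ k then w k * p j else 0)
          - (if j = k then w j * p j else 0)) := by
          refine Finset.sum_congr rfl fun j _ => Finset.sum_congr rfl fun k _ => point j k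
      _ = (∑ j, ∑ k, (if k ≤ j then w j * p k else 0))
          + (∑ j, ∑ k, (if j ≤ k then w k * p j else 0))
          - (∑ j : Fin n, ∑ k : Fin n, (if j = k then w j * p j else 0)) := by
          rw [← Finset.sum_add_distrib, ← Finset.sum_sub_distrib]
          refine Finset.sum_congr rfl fun j _ => ?_
          rw [← Finset.sum_add_distrib, ← Finset.sum_sub_distrib]
      _ = SP + SP - W' := by
          rw [e2, e3]
          congr 1
          congr 1
          exact Finset.sum_congr rfl fun j _ => e1 j
      _ = 2 * SP - W' := by ring
  -- Claim 1 : Q2 + W' ≤ 2 * T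
  have claim1 : Q2 + W' ≤ 2 * T := by
    set B : Fin n → Fin n → ℝ :=
      fun j k => if σ k = σ j ∧ π k ≤ π j then w j * p k else 0 with hBdef
    have hT : T = ∑ j, ∑ k, B j k := by
      refine Finset.sum_congr rfl fun j _ => ?_
      rw [Finset.mul_sum, Finset.sum_filter]
    have hQ2 : Q2 = ∑ j, ∑ k, (if σ k = σ j then a j k else 0) := by
      refine Finset.sum_congr rfl fun j _ => ?_
      rw [Finset.sum_filter]
    have hW' : W' = ∑ j : Fin n, ∑ k : Fin n, (if j = k then w j * p j else 0) := by
      refine Finset.sum_congr rfl fun j _ => ?_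
      simp
    have point : ∀ j k : Fin n,
        (if σ k = σ j then a j k else 0) + (if j = k then w j * p j else 0)
          ≤ B j k + B k j := by
      intro j k
      by_cases hσ : σ k = σ j
      · by_cases hjk : j = k
        · subst hjk
          simp [hBdef, ha, hwρ]
        · have hπ : π j ≠ π k := fun h => hjk (π.injective h)
          have haub : a j k ≤ w j * p k ∧ a j k ≤ w k * p j := by
            rcases le_total k j with h | h
            · rw [ha, max_eq_left h, min_eq_right h]
              exact ⟨le_refl _, hsm k j h⟩
            · rw [ha, max_eq_right h, min_eq_left h]
              exact ⟨hsm j k h, le_refl _⟩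
          rw [if_pos hσ, if_neg hjk, add_zero, hBdef]
          rcases lt_or_gt_of_ne hπ with h | h
          · -- π j < π k : second term active
            have h1 : ¬ (σ k = σ j ∧ π k ≤ π j) := fun hc => absurd hc.2 (not_le.mpr h)
            have h2 : σ j = σ k ∧ π j ≤ π k := ⟨hσ.symm, h.le⟩
            simp only [if_neg h1, if_pos h2, zero_add]
            exact haub.2
          · have h1 : σ k = σ j ∧ π k ≤ π j := ⟨hσ, h.le⟩
            have h2 : ¬ (σ j = σ k ∧ π j ≤ π k) := fun hc => absurd hc.2 (not_le.mpr h)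
            simp only [if_pos h1, if_neg h2, add_zero]
            exact haub.1
      · have hjk : j ≠ k := fun h => hσ (by rw [h])
        rw [if_neg hσ, if_neg hjk, hBdef]
        have h1 : ¬ (σ k = σ j ∧ π k ≤ π j) := fun hc => hσ hc.1
        have h2 : ¬ (σ j = σ k ∧ π j ≤ π k) := fun hc => hσ (hc.1.symm)
        simp [h1, h2]
    have hsum : ∑ j, ∑ k, ((if σ k = σ j then a j k else 0) + (if j = k then w j * p j else 0))
        ≤ ∑ j, ∑ k, (B j k + B k j) :=
      Finset.sum_le_sum fun j _ => Finset.sum_le_sum fun k _ => point j k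
    have hBB : (∑ j, ∑ k, (B j k + B k j)) = 2 * T := by
      have h1 : (∑ j, ∑ k, (B j k + B k j))
          = (∑ j, ∑ k, B j k) + (∑ j, ∑ k, B k j) := by
        simp only [Finset.sum_add_distrib]
      have h2 : (∑ j, ∑ k, B k j) = ∑ k, ∑ j, B k j := Finset.sum_comm
      rw [h1, h2, ← hT]
      ring
    have hQW : Q2 + W' = ∑ j, ∑ k, ((if σ k = σ j then a j k else 0)
        + (if j = k then w j * p j else 0)) := by
      rw [hQ2, hW', ← Finset.sum_add_distrib]
      refine Finset.sum_congr rfl fun j _ => ?_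
      rw [← Finset.sum_add_distrib]
    rw [hQW, ← hBB]
    exact hsum
  -- Key lemma
  have hkey : Q1 ≤ (m:ℝ) * Q2 :=
    key_lemma n m p ρ (fun j => div_nonneg (hw j) (hp j).le) hsmith σ
  -- processing-time bound
  have hproc : (1 / (m:ℝ)) * SP + (((m:ℝ) - 1) / (2 * (m:ℝ))) * W' ≤ T := by
    have e : (1 / (m:ℝ)) * SP + (((m:ℝ) - 1) / (2 * (m:ℝ))) * W'
        = (2 * SP + ((m:ℝ) - 1) * W') / (2 * (m:ℝ)) := by
      field_simp
    rw [e, div_le_iff₀ (by positivity)]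
    have h1 : (m:ℝ) * (Q2 + W') ≤ (m:ℝ) * (2 * T) :=
      mul_le_mul_of_nonneg_left claim1 hM.le
    nlinarith [claim2, hkey]
  -- φ bound
  have hφbound : 2 * (⨅ i, φ i) * (∑ j, w j) ≤ ∑ j, 2 * w j * φ (σ j) := by
    have : 2 * (⨅ i, φ i) * (∑ j, w j) = ∑ j, 2 * w j * (⨅ i, φ i) := by
      rw [Finset.mul_sum]
      refine Finset.sum_congr rfl fun j _ => by ring
    rw [this]
    refine Finset.sum_le_sum fun j _ => ?_
    have hinf : (⨅ i, φ i) ≤ φ (σ j) := ciInf_le (Finite.bddBelow_range φ) (σ j)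
    have : (0:ℝ) ≤ 2 * w j := by linarith [hw j]
    exact mul_le_mul_of_nonneg_left hinf this
  have hsplit : (∑ j, w j * (2 * φ (σ j) + ∑ k ∈ univ.filter (fun k => σ k = σ j ∧ π k ≤ π j), p k))
      = (∑ j, 2 * w j * φ (σ j)) + T := by
    rw [hTdef, ← Finset.sum_add_distrib]
    refine Finset.sum_congr rfl fun j _ => by ring
  rw [hsplit]
  linarith
end

section
/- In any LRF schedule, the completion time of each task j satisfies C_j ≤ 2·φ_max + (1/m)·Σ_{k=1}^{j-1} p_k + p_j. -/
open Finset

/-- In any LRF schedule (tasks considered in index order, each task assigned to a worker of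
currently minimum expected workload, each worker processing its tasks in assignment order),
the completion time of each task `j`, namely
`C j = 2 * φ (σ j) + ∑_{k ≤ j, σ k = σ j} p k`, satisfies
`C j ≤ 2 * φ_max + (1/m) * ∑_{k < j} p k + p j`. -/
theorem lrf_completion_time_upper_bound (n m : ℕ) (hm : 1 ≤ m)
    (w p : Fin n → ℝ) (φ : Fin m → ℝ)
    (hw : ∀ j, 0 ≤ w j) (hp : ∀ j, 0 < p j) (hφ : ∀ i, 0 < φ i)
    (hsmith : ∀ j k : Fin n, j ≤ k → w k / p k ≤ w j / p j)
    (σ : Fin n → Fin m)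
    (hLRF : ∀ j : Fin n, ∀ i : Fin m,
      2 * φ (σ j) + ∑ k ∈ univ.filter (fun k => k < j ∧ σ k = σ j), p k
        ≤ 2 * φ i + ∑ k ∈ univ.filter (fun k => k < j ∧ σ k = i), p k)
    (j : Fin n) :
    2 * φ (σ j) + ∑ k ∈ univ.filter (fun k => k ≤ j ∧ σ k = σ j), p k
      ≤ 2 * (⨆ i, φ i) + (1 / (m : ℝ)) * ∑ k ∈ univ.filter (fun k => k < j), p k + p j := by
  have hmpos : (0:ℝ) < m := by exact_mod_cast hm
  haveI : Nonempty (Fin m) := ⟨⟨0, hm⟩⟩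
  -- split the sum over k ≤ j into k < j plus k = j
  have hsplit : (univ.filter (fun k => k ≤ j ∧ σ k = σ j))
      = insert j (univ.filter (fun k : Fin n => k < j ∧ σ k = σ j)) := by
    ext k
    simp only [mem_filter, mem_univ, true_and, mem_insert]
    constructor
    · rintro ⟨hk, hσ⟩
      rcases lt_or_eq_of_le hk with h | h
      · exact Or.inr ⟨h, hσ⟩
      · exact Or.inl h
    · rintro (rfl | ⟨hk, hσ⟩)
      · exact ⟨le_refl _, rfl⟩
      · exact ⟨le_of_lt hk, hσ⟩
  have hjnot : j ∉ univ.filter (fun k : Fin n => k < j ∧ σ k = σ j) := by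
    simp
  rw [hsplit, Finset.sum_insert hjnot]
  -- the main inequality on workload
  set S := ∑ k ∈ univ.filter (fun k : Fin n => k < j ∧ σ k = σ j), p k with hS
  have key : 2 * φ (σ j) + S ≤ 2 * (⨆ i, φ i) + (1 / (m : ℝ)) * ∑ k ∈ univ.filter (fun k => k < j), p k := by
    have hsum : (m : ℝ) * (2 * φ (σ j) + S)
        ≤ ∑ i : Fin m, (2 * φ i + ∑ k ∈ univ.filter (fun k => k < j ∧ σ k = i), p k) := by
      have : (m : ℝ) * (2 * φ (σ j) + S) = ∑ _i : Fin m, (2 * φ (σ j) + S) := by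
        simp [Finset.sum_const]; ring
      rw [this]
      exact Finset.sum_le_sum (fun i _ => hLRF j i)
    have hfib : ∑ i : Fin m, ∑ k ∈ univ.filter (fun k => k < j ∧ σ k = i), p k
        = ∑ k ∈ univ.filter (fun k => k < j), p k := by
      rw [Finset.sum_comm' (t' := univ.filter (fun k : Fin n => k < j))
        (s' := fun k => univ.filter (fun i => σ k = i))]
      · simp [Finset.filter_eq]
      · intro i k
        simp only [mem_filter, mem_univ, true_and]
        tauto
    have hφmax : ∀ i, φ i ≤ ⨆ i, φ i := fun i =>
      le_ciSup (Set.Finite.bddAbove (Set.finite_range φ)) i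
    have hsumφ : ∑ i : Fin m, (2 * φ i) ≤ (m : ℝ) * (2 * (⨆ i, φ i)) := by
      calc ∑ i : Fin m, (2 * φ i) ≤ ∑ _i : Fin m, (2 * (⨆ i, φ i)) :=
            Finset.sum_le_sum (fun i _ => by linarith [hφmax i])
        _ = (m : ℝ) * (2 * (⨆ i, φ i)) := by simp [Finset.sum_const]
    have h2 : (m : ℝ) * (2 * φ (σ j) + S)
        ≤ (m : ℝ) * (2 * (⨆ i, φ i)) + ∑ k ∈ univ.filter (fun k => k < j), p k := by
      calc (m : ℝ) * (2 * φ (σ j) + S)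
          ≤ ∑ i : Fin m, (2 * φ i + ∑ k ∈ univ.filter (fun k => k < j ∧ σ k = i), p k) := hsum
        _ = ∑ i : Fin m, (2 * φ i) + ∑ i : Fin m, ∑ k ∈ univ.filter (fun k => k < j ∧ σ k = i), p k := by
            rw [Finset.sum_add_distrib]
        _ ≤ (m : ℝ) * (2 * (⨆ i, φ i)) + ∑ k ∈ univ.filter (fun k => k < j), p k := by
            rw [hfib]; linarith
    have hinv : ((m:ℝ))⁻¹ * m = 1 := inv_mul_cancel₀ (ne_of_gt hmpos)
    have hinvpos : (0:ℝ) < (m:ℝ)⁻¹ := inv_pos.mpr hmpos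
    rw [one_div]
    have h3 : 2 * φ (σ j) + S ≤ ((m:ℝ) * (2 * (⨆ i, φ i)) + ∑ k ∈ univ.filter (fun k => k < j), p k) / m :=
      (le_div_iff₀ hmpos).mpr (by linarith)
    rw [add_div, mul_div_cancel_left₀ _ (ne_of_gt hmpos), div_eq_inv_mul] at h3
    linarith
  linarith
end

section
/- The total weighted completion time WCT_LRF of any LRF schedule satisfies WCT_LRF ≤ (1/m)·M_1 + ((m-1)/m)·M_n + 2·φ_max·Σ_{j=1}^n w_j, where M_1 = Σ_{j=1}^n w_j Σ_{k=1}^{j} p_k and M_n = Σ_{j=1}^n w_j p_j. -/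
open Finset

/-- Upper bound on the total weighted completion time of any LRF schedule:
`WCT_LRF ≤ (1/m) * M₁ + ((m-1)/m) * Mₙ + 2 * φ_max * ∑ j, w j`, where
`M₁ = ∑ j, w j * ∑_{k ≤ j} p k` and `Mₙ = ∑ j, w j * p j`.
An LRF schedule assigns tasks in index order, each to a worker of minimum current
expected workload, with each worker processing its tasks in assignment order, so that
`C j = 2 * φ (σ j) + ∑_{k ≤ j, σ k = σ j} p k`. -/
theorem lrf_wct_upper_bound (n m : ℕ) (hm : 1 ≤ m)
    (w p : Fin n → ℝ) (φ : Fin m → ℝ)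
    (hw : ∀ j, 0 ≤ w j) (hp : ∀ j, 0 < p j) (hφ : ∀ i, 0 < φ i)
    (hsmith : ∀ j k : Fin n, j ≤ k → w k / p k ≤ w j / p j)
    (σ : Fin n → Fin m)
    (hLRF : ∀ j : Fin n, ∀ i : Fin m,
      2 * φ (σ j) + ∑ k ∈ univ.filter (fun k => k < j ∧ σ k = σ j), p k
        ≤ 2 * φ i + ∑ k ∈ univ.filter (fun k => k < j ∧ σ k = i), p k) :
    ∑ j, w j * (2 * φ (σ j) + ∑ k ∈ univ.filter (fun k => k ≤ j ∧ σ k = σ j), p k)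
      ≤ (1 / (m : ℝ)) * ∑ j, w j * ∑ k ∈ univ.filter (fun k => k ≤ j), p k
        + (((m : ℝ) - 1) / (m : ℝ)) * ∑ j, w j * p j
        + 2 * (⨆ i, φ i) * ∑ j, w j := by
  have hm0 : (0:ℝ) < (m:ℝ) := by exact_mod_cast hm
  haveI : Nonempty (Fin m) := ⟨⟨0, hm⟩⟩
  have hsup : ∀ i : Fin m, φ i ≤ ⨆ i, φ i := fun i =>
    le_ciSup (Set.Finite.bddAbove (Set.finite_range φ)) i
  have key : ∀ j : Fin n,
      2 * φ (σ j) + ∑ k ∈ univ.filter (fun k => k ≤ j ∧ σ k = σ j), p k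
        ≤ 2 * (⨆ i, φ i) + (1/(m:ℝ)) * ∑ k ∈ univ.filter (fun k => k ≤ j), p k
          + (((m:ℝ)-1)/(m:ℝ)) * p j := by
    intro j
    have hnotmem : ∀ i : Fin m, j ∉ univ.filter (fun k => k < j ∧ σ k = i) := by
      intro i h
      simp only [mem_filter] at h
      exact lt_irrefl j h.2.1
    have hsplit1 : (univ.filter (fun k => k ≤ j ∧ σ k = σ j))
        = insert j (univ.filter (fun k => k < j ∧ σ k = σ j)) := by
      ext k
      simp only [mem_filter, mem_univ, true_and, mem_insert]
      constructor
      · rintro ⟨hle, hσ⟩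
        rcases eq_or_lt_of_le hle with h | h
        · exact Or.inl h
        · exact Or.inr ⟨h, hσ⟩
      · rintro (rfl | ⟨h, hσ⟩)
        · exact ⟨le_refl _, rfl⟩
        · exact ⟨le_of_lt h, hσ⟩
    have hsplit2 : (univ.filter (fun k : Fin n => k ≤ j))
        = insert j (univ.filter (fun k => k < j)) := by
      ext k
      simp only [mem_filter, mem_univ, true_and, mem_insert]
      constructor
      · intro hle
        rcases eq_or_lt_of_le hle with h | h
        · exact Or.inl h
        · exact Or.inr h
      · rintro (rfl | h)
        · exact le_refl _
        · exact le_of_lt h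
    have hnotmem2 : j ∉ univ.filter (fun k : Fin n => k < j) := by
      intro h
      simp only [mem_filter] at h
      exact lt_irrefl j h.2
    rw [hsplit1, Finset.sum_insert (hnotmem (σ j)), hsplit2,
      Finset.sum_insert hnotmem2]
    -- averaging argument
    have havg : (m:ℝ) * (2 * φ (σ j)
        + ∑ k ∈ univ.filter (fun k => k < j ∧ σ k = σ j), p k)
        ≤ ∑ i : Fin m, (2 * φ i + ∑ k ∈ univ.filter (fun k => k < j ∧ σ k = i), p k) := by
      calc (m:ℝ) * (2 * φ (σ j) + ∑ k ∈ univ.filter (fun k => k < j ∧ σ k = σ j), p k)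
          = ∑ _i : Fin m, (2 * φ (σ j)
            + ∑ k ∈ univ.filter (fun k => k < j ∧ σ k = σ j), p k) := by
            rw [Finset.sum_const, card_univ, Fintype.card_fin, nsmul_eq_mul]
        _ ≤ _ := Finset.sum_le_sum fun i _ => hLRF j i
    have hfib : ∑ i : Fin m, ∑ k ∈ univ.filter (fun k => k < j ∧ σ k = i), p k
        = ∑ k ∈ univ.filter (fun k : Fin n => k < j), p k := by
      have h1 : ∀ i : Fin m, univ.filter (fun k => k < j ∧ σ k = i)
          = (univ.filter (fun k : Fin n => k < j)).filter (fun k => σ k = i) := by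
        intro i; rw [filter_filter]
      simp_rw [h1]
      exact Finset.sum_fiberwise _ _ _
    have hφsum : ∑ i : Fin m, 2 * φ i ≤ (m:ℝ) * (2 * (⨆ i, φ i)) := by
      calc ∑ i : Fin m, 2 * φ i ≤ ∑ _i : Fin m, 2 * (⨆ i, φ i) :=
            Finset.sum_le_sum fun i _ => by
              have := hsup i; linarith
        _ = (m:ℝ) * (2 * (⨆ i, φ i)) := by
            rw [Finset.sum_const, card_univ, Fintype.card_fin, nsmul_eq_mul]
    rw [Finset.sum_add_distrib, hfib] at havg
    have hmain : (m:ℝ) * (2 * φ (σ j)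
        + ∑ k ∈ univ.filter (fun k => k < j ∧ σ k = σ j), p k)
        ≤ (m:ℝ) * (2 * (⨆ i, φ i)) + ∑ k ∈ univ.filter (fun k : Fin n => k < j), p k :=
      le_trans havg (by linarith)
    have hdiv : 2 * φ (σ j) + ∑ k ∈ univ.filter (fun k => k < j ∧ σ k = σ j), p k
        ≤ 2 * (⨆ i, φ i) + (1/(m:ℝ)) * ∑ k ∈ univ.filter (fun k : Fin n => k < j), p k := by
      rw [← mul_le_mul_iff_right₀ hm0]
      calc (m:ℝ) * (2 * φ (σ j) + ∑ k ∈ univ.filter (fun k => k < j ∧ σ k = σ j), p k)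
          ≤ (m:ℝ) * (2 * (⨆ i, φ i))
            + ∑ k ∈ univ.filter (fun k : Fin n => k < j), p k := hmain
        _ = (m:ℝ) * (2 * (⨆ i, φ i)
            + (1/(m:ℝ)) * ∑ k ∈ univ.filter (fun k : Fin n => k < j), p k) := by
            field_simp
    have heq : (1/(m:ℝ)) * (p j + ∑ k ∈ univ.filter (fun k : Fin n => k < j), p k)
        + (((m:ℝ)-1)/(m:ℝ)) * p j
        = (1/(m:ℝ)) * ∑ k ∈ univ.filter (fun k : Fin n => k < j), p k + p j := by
      field_simp; ring
    linarith [hdiv]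
  calc ∑ j, w j * (2 * φ (σ j) + ∑ k ∈ univ.filter (fun k => k ≤ j ∧ σ k = σ j), p k)
      ≤ ∑ j, w j * (2 * (⨆ i, φ i)
          + (1/(m:ℝ)) * ∑ k ∈ univ.filter (fun k => k ≤ j), p k
          + (((m:ℝ)-1)/(m:ℝ)) * p j) :=
        Finset.sum_le_sum fun j _ => mul_le_mul_of_nonneg_left (key j) (hw j)
    _ = (1 / (m : ℝ)) * ∑ j, w j * ∑ k ∈ univ.filter (fun k => k ≤ j), p k
        + (((m : ℝ) - 1) / (m : ℝ)) * ∑ j, w j * p j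
        + 2 * (⨆ i, φ i) * ∑ j, w j := by
      rw [Finset.mul_sum (s := univ) (a := 1 / (m : ℝ)), Finset.mul_sum (s := univ) (a := ((m : ℝ) - 1) / (m : ℝ)),
        Finset.mul_sum (s := univ) (a := 2 * (⨆ i, φ i)), ← Finset.sum_add_distrib, ← Finset.sum_add_distrib]
      apply Finset.sum_congr rfl; intros; ring
end

section
/- Assume m ≤ n. Let WCT_LRF be the total weighted completion time of an LRF schedule and let WCT_OPT be the minimum total weighted completion time over all schedules. Then WCT_LRF ≤ max(3/2, φ_max/φ_min)·WCT_OPT; equivalently, for every schedule Λ, WCT_LRF ≤ max(3/2, φ_max/φ_min)·Σ_{j=1}^n w_j C_j(Λ). -/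
open Finset

private lemma abel_nonneg (c : ℕ → ℝ) :
    ∀ (N : ℕ) (ρ : ℕ → ℝ), (∀ j, 0 ≤ ρ j) → (∀ j k, j ≤ k → ρ k ≤ ρ j) →
      (∀ t, t < N → 0 ≤ ∑ j ∈ Finset.range (t + 1), c j) →
      0 ≤ ∑ j ∈ Finset.range N, ρ j * c j := by
  intro N
  induction N with
  | zero => intro ρ _ _ _; simp
  | succ N ih =>
    intro ρ hρ0 hρmono hpartial
    have h1 : ∀ j ∈ Finset.range (N + 1), ρ j * c j
        = (max (ρ j - ρ N) 0) * c j + ρ N * c j := by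
      intro j hj
      have hj' : j ≤ N := by simpa [Nat.lt_succ_iff] using hj
      have : ρ N ≤ ρ j := hρmono j N hj'
      rw [max_eq_left (by linarith)]; ring
    rw [Finset.sum_congr rfl h1, Finset.sum_add_distrib, ← Finset.mul_sum]
    have h2 : 0 ≤ ∑ j ∈ Finset.range (N + 1), max (ρ j - ρ N) 0 * c j := by
      rw [Finset.sum_range_succ]
      have hz : max (ρ N - ρ N) 0 * c N = 0 := by simp
      rw [hz, add_zero]
      exact ih (fun j => max (ρ j - ρ N) 0) (fun j => le_max_right _ _)
        (fun j k hjk => max_le_max (by have := hρmono j k hjk; linarith) le_rfl)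
        (fun t ht => hpartial t (Nat.lt_succ_of_lt ht))
    have h3 : 0 ≤ ρ N * ∑ j ∈ Finset.range (N + 1), c j :=
      mul_nonneg (hρ0 N) (hpartial N (Nat.lt_succ_self N))
    linarith

private lemma pair_sum {n : ℕ} (p : Fin n → ℝ) (g : Fin n → Fin n)
    (hg : Function.Injective g) (U : Finset (Fin n)) :
    ∑ j ∈ U, p j * ∑ k ∈ U.filter (fun k => g k ≤ g j), p k
      = ((∑ j ∈ U, p j) ^ 2 + ∑ j ∈ U, p j ^ 2) / 2 := by
  have key : ∀ j k : Fin n,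
      (if g k ≤ g j then p j * p k else 0) + (if g j ≤ g k then p k * p j else 0)
        = p j * p k + (if j = k then p j * p k else 0) := by
    intro j k
    by_cases h : j = k
    · subst h; simp
    · have hne : g j ≠ g k := fun hh => h (hg hh)
      rcases lt_or_gt_of_ne hne with hlt | hgt
      · rw [if_neg (not_le.2 hlt), if_pos hlt.le, if_neg h]; ring
      · rw [if_pos hgt.le, if_neg (not_le.2 hgt), if_neg h]
  have e1 : ∑ j ∈ U, p j * ∑ k ∈ U.filter (fun k => g k ≤ g j), p k
      = ∑ j ∈ U, ∑ k ∈ U, (if g k ≤ g j then p j * p k else 0) := by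
    refine Finset.sum_congr rfl fun j _ => ?_
    rw [Finset.mul_sum, Finset.sum_filter]
  set S := ∑ j ∈ U, ∑ k ∈ U, (if g k ≤ g j then p j * p k else 0) with hS
  have e2 : S = ∑ j ∈ U, ∑ k ∈ U, (if g j ≤ g k then p k * p j else 0) := Finset.sum_comm
  have e3 : S + S = (∑ j ∈ U, p j) ^ 2 + ∑ j ∈ U, p j ^ 2 := by
    calc S + S
        = ∑ j ∈ U, (∑ k ∈ U, (if g k ≤ g j then p j * p k else 0)
            + ∑ k ∈ U, (if g j ≤ g k then p k * p j else 0)) := by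
          rw [Finset.sum_add_distrib, ← hS, ← e2]
      _ = ∑ j ∈ U, (p j * ∑ k ∈ U, p k + p j ^ 2) := by
          refine Finset.sum_congr rfl fun j hj => ?_
          rw [← Finset.sum_add_distrib,
            Finset.sum_congr rfl (fun k _ => key j k), Finset.sum_add_distrib,
            ← Finset.mul_sum, Finset.sum_ite_eq U j (fun k => p j * p k), if_pos hj, sq]
      _ = (∑ j ∈ U, p j) ^ 2 + ∑ j ∈ U, p j ^ 2 := by
          rw [Finset.sum_add_distrib, ← Finset.sum_mul, sq]
  rw [e1]; linarith

private lemma tele_sq (f : ℕ → ℝ) (t : ℕ) :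
    ∑ j ∈ Finset.range t, (f j * (∑ k ∈ Finset.range j, f k) + f j ^ 2 / 2)
      = (∑ j ∈ Finset.range t, f j) ^ 2 / 2 := by
  induction t with
  | zero => simp
  | succ t ih =>
    rw [Finset.sum_range_succ, ih, Finset.sum_range_succ (f := f)]
    ring

private lemma finSum_eq_natSum {n : ℕ} (a : Fin n → ℝ) :
    ∑ j : Fin n, a j = ∑ j ∈ Finset.range n, if h : j < n then a ⟨j, h⟩ else 0 := by
  rw [← Fin.sum_univ_eq_sum_range (fun j => if h : j < n then a ⟨j, h⟩ else 0) n]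
  exact Finset.sum_congr rfl fun j _ => by simp

private lemma finSum_le_eq_natSum {n : ℕ} (a : Fin n → ℝ) (t : ℕ) (ht : t < n) :
    ∑ j ∈ Finset.univ.filter (fun j : Fin n => j ≤ (⟨t, ht⟩ : Fin n)), a j
      = ∑ j ∈ Finset.range (t + 1), if h : j < n then a ⟨j, h⟩ else 0 := by
  have h1 : ∑ j ∈ Finset.univ.filter (fun j : Fin n => j ≤ (⟨t, ht⟩ : Fin n)), a j
      = ∑ jj ∈ Finset.range n,
          (if h : jj < n then (if jj ≤ t then a ⟨jj, h⟩ else 0) else 0) := by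
    rw [← Fin.sum_univ_eq_sum_range
      (fun jj : ℕ => if h : jj < n then (if jj ≤ t then a ⟨jj, h⟩ else 0) else 0) n]
    rw [Finset.sum_filter]
    refine Finset.sum_congr rfl fun j _ => ?_
    simp only [dif_pos j.isLt, Fin.le_def, Fin.eta]
  rw [h1]
  rw [show Finset.range (t + 1) = (Finset.range n).filter (· ≤ t) by
    ext x; simp only [Finset.mem_range, Finset.mem_filter]; omega]
  rw [Finset.sum_filter]
  refine Finset.sum_congr rfl fun j hj => ?_
  have hjn : j < n := Finset.mem_range.1 hj
  rw [dif_pos hjn]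
  by_cases h : j ≤ t <;> simp [h, hjn]

private lemma finSum_lt_eq_natSum {n : ℕ} (a : Fin n → ℝ) (j : Fin n) :
    ∑ k ∈ Finset.univ.filter (fun k : Fin n => k < j), a k
      = ∑ k ∈ Finset.range (j : ℕ), if h : k < n then a ⟨k, h⟩ else 0 := by
  have h1 : ∑ k ∈ Finset.univ.filter (fun k : Fin n => k < j), a k
      = ∑ kk ∈ Finset.range n,
          (if h : kk < n then (if kk < (j : ℕ) then a ⟨kk, h⟩ else 0) else 0) := by
    rw [← Fin.sum_univ_eq_sum_range
      (fun kk : ℕ => if h : kk < n then (if kk < (j : ℕ) then a ⟨kk, h⟩ else 0) else 0) n]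
    rw [Finset.sum_filter]
    refine Finset.sum_congr rfl fun k _ => ?_
    simp only [dif_pos k.isLt, Fin.lt_def, Fin.eta]
  rw [h1]
  rw [show Finset.range (j : ℕ) = (Finset.range n).filter (· < (j : ℕ)) by
    ext x; simp only [Finset.mem_range, Finset.mem_filter]; have := j.isLt; omega]
  rw [Finset.sum_filter]
  refine Finset.sum_congr rfl fun k hk => ?_
  have hkn : k < n := Finset.mem_range.1 hk
  rw [dif_pos hkn]
  by_cases h : k < (j : ℕ) <;> simp [h, hkn]


/-- Approximation ratio of the LRF algorithm: if `m ≤ n`, then for every schedule `Λ`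
(given by an assignment `σ'` and a priority permutation `π'`), the total weighted
completion time of any LRF schedule `σ` satisfies
`WCT_LRF ≤ max (3/2) (φ_max / φ_min) * ∑ j, w j * C j (Λ)`.
In particular `WCT_LRF ≤ max (3/2) (φ_max / φ_min) * WCT_OPT`. -/
theorem lrf_approximation_ratio (n m : ℕ) (hm : 1 ≤ m) (hmn : m ≤ n)
    (w p : Fin n → ℝ) (φ : Fin m → ℝ)
    (hw : ∀ j, 0 ≤ w j) (hp : ∀ j, 0 < p j) (hφ : ∀ i, 0 < φ i)
    (hsmith : ∀ j k : Fin n, j ≤ k → w k / p k ≤ w j / p j)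
    (σ : Fin n → Fin m)
    (hLRF : ∀ j : Fin n, ∀ i : Fin m,
      2 * φ (σ j) + ∑ k ∈ univ.filter (fun k => k < j ∧ σ k = σ j), p k
        ≤ 2 * φ i + ∑ k ∈ univ.filter (fun k => k < j ∧ σ k = i), p k)
    (σ' : Fin n → Fin m) (π' : Equiv.Perm (Fin n)) :
    ∑ j, w j * (2 * φ (σ j) + ∑ k ∈ univ.filter (fun k => k ≤ j ∧ σ k = σ j), p k)
      ≤ max (3 / 2) ((⨆ i, φ i) / (⨅ i, φ i)) *
          ∑ j, w j *
            (2 * φ (σ' j) + ∑ k ∈ univ.filter (fun k => σ' k = σ' j ∧ π' k ≤ π' j), p k) := by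
  haveI : Nonempty (Fin m) := ⟨⟨0, hm⟩⟩
  have hm0 : (0 : ℝ) < (m : ℝ) := by exact_mod_cast hm
  set φmax := ⨆ i, φ i with hφmaxdef
  set φmin := ⨅ i, φ i with hφmindef
  have hφle : ∀ i, φ i ≤ φmax := fun i =>
    le_ciSup (Set.Finite.bddAbove (Set.finite_range φ)) i
  have hφge : ∀ i, φmin ≤ φ i := fun i =>
    ciInf_le (Set.Finite.bddBelow (Set.finite_range φ)) i
  have hφminpos : 0 < φmin := by
    obtain ⟨i0, -, hi0⟩ := Finset.exists_min_image Finset.univ φ ⟨⟨0, hm⟩, mem_univ _⟩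
    exact lt_of_lt_of_le (hφ i0) (le_ciInf fun i => hi0 i (mem_univ i))
  -- abbreviations
  set S' : Fin n → ℝ := fun j => ∑ k ∈ univ.filter (fun k => k < j), p k with hS'def
  set D : Fin n → ℝ :=
    fun j => ∑ k ∈ univ.filter (fun k => σ' k = σ' j ∧ π' k ≤ π' j), p k with hDdef
  set W := ∑ j, w j with hWdef
  set B := ∑ j, w j * p j with hBdef
  set A' := ∑ j, w j * S' j with hA'def
  set E := ∑ j, w j * D j with hEdef
  set R := max (3 / 2 : ℝ) (φmax / φmin) with hRdef
  have hBnn : 0 ≤ B := Finset.sum_nonneg fun j _ => mul_nonneg (hw j) (hp j).le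
  have hS'nn : ∀ j, 0 ≤ S' j := fun j => Finset.sum_nonneg fun k _ => (hp k).le
  have hA'nn : 0 ≤ A' := Finset.sum_nonneg fun j _ => mul_nonneg (hw j) (hS'nn j)
  have hWnn : 0 ≤ W := Finset.sum_nonneg fun j _ => hw j
  have hDp : ∀ j, p j ≤ D j := by
    intro j
    refine Finset.single_le_sum (f := p) (fun k _ => (hp k).le) ?_
    simp
  have hEB : B ≤ E :=
    Finset.sum_le_sum fun j _ => mul_le_mul_of_nonneg_left (hDp j) (hw j)
  have hEnn : 0 ≤ E := le_trans hBnn hEB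
  -- Step 1 : per-task LRF bound
  have step1 : ∀ j : Fin n,
      2 * φ (σ j) + ∑ k ∈ univ.filter (fun k => k ≤ j ∧ σ k = σ j), p k
        ≤ 2 * φmax + S' j / m + p j := by
    intro j
    have hins : univ.filter (fun k => k ≤ j ∧ σ k = σ j)
        = insert j (univ.filter (fun k => k < j ∧ σ k = σ j)) := by
      ext k
      simp only [mem_filter, mem_univ, true_and, mem_insert]
      constructor
      · rintro ⟨hle, hσ⟩
        rcases lt_or_eq_of_le hle with h | h
        · exact Or.inr ⟨h, hσ⟩
        · exact Or.inl h
      · rintro (rfl | ⟨hlt, hσ⟩)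
        · exact ⟨le_refl _, rfl⟩
        · exact ⟨hlt.le, hσ⟩
    have hnotmem : j ∉ univ.filter (fun k => k < j ∧ σ k = σ j) := by simp
    rw [hins, Finset.sum_insert hnotmem]
    have havg : (m : ℝ) * (2 * φ (σ j) + ∑ k ∈ univ.filter (fun k => k < j ∧ σ k = σ j), p k)
        ≤ 2 * ((m : ℝ) * φmax) + S' j := by
      have h1 : (m : ℝ) * (2 * φ (σ j) + ∑ k ∈ univ.filter (fun k => k < j ∧ σ k = σ j), p k)
          = ∑ _i : Fin m, (2 * φ (σ j) + ∑ k ∈ univ.filter (fun k => k < j ∧ σ k = σ j), p k) := by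
        rw [Finset.sum_const, card_univ, Fintype.card_fin, nsmul_eq_mul]
      have h2 : ∑ _i : Fin m, (2 * φ (σ j) + ∑ k ∈ univ.filter (fun k => k < j ∧ σ k = σ j), p k)
          ≤ ∑ i : Fin m, (2 * φ i + ∑ k ∈ univ.filter (fun k => k < j ∧ σ k = i), p k) :=
        Finset.sum_le_sum fun i _ => hLRF j i
      have h3 : ∑ i : Fin m, (2 * φ i + ∑ k ∈ univ.filter (fun k => k < j ∧ σ k = i), p k)
          = 2 * (∑ i, φ i) + S' j := by
        rw [Finset.sum_add_distrib]
        congr 1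
        · rw [← Finset.mul_sum]
        · have hff : ∀ i : Fin m, univ.filter (fun k => k < j ∧ σ k = i)
              = (univ.filter (fun k => k < j)).filter (fun k => σ k = i) := fun i => by
            rw [Finset.filter_filter]
          rw [Finset.sum_congr rfl (fun i _ => by rw [hff i])]
          exact Finset.sum_fiberwise _ _ _
      have h4 : (∑ i, φ i) ≤ (m : ℝ) * φmax := by
        calc ∑ i, φ i ≤ ∑ _i : Fin m, φmax := Finset.sum_le_sum fun i _ => hφle i
          _ = (m : ℝ) * φmax := by
            rw [Finset.sum_const, card_univ, Fintype.card_fin, nsmul_eq_mul]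
      linarith
    have hX : 2 * φ (σ j) + ∑ k ∈ univ.filter (fun k => k < j ∧ σ k = σ j), p k
        ≤ 2 * φmax + S' j / m := by
      rw [show (2 : ℝ) * φmax + S' j / m = (2 * ((m : ℝ) * φmax) + S' j) / m by
        field_simp]
      rw [le_div_iff₀ hm0]
      have hcomm := mul_comm (m : ℝ)
        (2 * φ (σ j) + ∑ k ∈ univ.filter (fun k => k < j ∧ σ k = σ j), p k)
      linarith
    linarith
  -- Step 2 : summed LRF bound
  have step2 : ∑ j, w j * (2 * φ (σ j) + ∑ k ∈ univ.filter (fun k => k ≤ j ∧ σ k = σ j), p k)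
      ≤ 2 * φmax * W + (1 / (m : ℝ)) * A' + B := by
    calc ∑ j, w j * (2 * φ (σ j) + ∑ k ∈ univ.filter (fun k => k ≤ j ∧ σ k = σ j), p k)
        ≤ ∑ j, w j * (2 * φmax + S' j / m + p j) :=
          Finset.sum_le_sum fun j _ => mul_le_mul_of_nonneg_left (step1 j) (hw j)
      _ = 2 * φmax * W + (1 / (m : ℝ)) * A' + B := by
          rw [hWdef, hA'def, hBdef, Finset.mul_sum, Finset.mul_sum,
            ← Finset.sum_add_distrib, ← Finset.sum_add_distrib]
          refine Finset.sum_congr rfl fun j _ => ?_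
          ring
  -- Step 3 : EEI lower bound
  have step3 : (1 / (m : ℝ)) * A' + (1 / 2) * B + (1 / (2 * (m : ℝ))) * B ≤ E := by
    set e : Fin n → ℝ := fun j => D j - p j / 2 - (1 / (m : ℝ)) * (S' j + p j / 2) with hedef
    -- partial-sum claim
    have claim : ∀ (tn : ℕ) (htn : tn < n),
        0 ≤ ∑ j ∈ univ.filter (fun j : Fin n => j ≤ (⟨tn, htn⟩ : Fin n)), p j * e j := by
      intro tn htn
      set t : Fin n := ⟨tn, htn⟩ with htdef
      set T := univ.filter (fun j : Fin n => j ≤ t) with hTdef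
      set Q : Fin n → ℝ :=
        fun j => ∑ k ∈ T.filter (fun k => σ' k = σ' j ∧ π' k ≤ π' j), p k with hQdef
      set ℓ : Fin m → ℝ := fun i => ∑ j ∈ T.filter (fun j => σ' j = i), p j with hldef
      have hQD : ∀ j, Q j ≤ D j := by
        intro j
        rw [hQdef, hDdef]
        refine Finset.sum_le_sum_of_subset_of_nonneg ?_ (fun k _ _ => (hp k).le)
        intro k hk
        rw [hTdef] at hk
        simp only [mem_filter, mem_univ, true_and] at hk ⊢
        exact hk.2
      have hgroup : ∑ j ∈ T, p j * Q j
          = ∑ i : Fin m, ((ℓ i) ^ 2 + ∑ j ∈ T.filter (fun j => σ' j = i), p j ^ 2) / 2 := by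
        rw [← Finset.sum_fiberwise T (fun j => σ' j) (fun j => p j * Q j)]
        refine Finset.sum_congr rfl fun i _ => ?_
        have hU : ∀ j ∈ T.filter (fun j => σ' j = i), p j * Q j
            = p j * ∑ k ∈ (T.filter (fun j => σ' j = i)).filter (fun k => π' k ≤ π' j), p k := by
          intro j hj
          have hji : σ' j = i := (Finset.mem_filter.1 hj).2
          have hset : T.filter (fun k => σ' k = σ' j ∧ π' k ≤ π' j)
              = (T.filter (fun j => σ' j = i)).filter (fun k => π' k ≤ π' j) := by
            rw [Finset.filter_filter]
            ext k
            simp only [hTdef, Finset.mem_filter, Finset.mem_univ, true_and, hji]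
            tauto
          simp only [hQdef]
          rw [hset]
        rw [Finset.sum_congr rfl hU, pair_sum p (⇑π') π'.injective (T.filter (fun j => σ' j = i))]
      have hl : ∑ i : Fin m, ℓ i = ∑ j ∈ T, p j := by
        rw [hldef]
        exact Finset.sum_fiberwise _ _ _
      have hq2 : ∑ i : Fin m, ∑ j ∈ T.filter (fun j => σ' j = i), p j ^ 2
          = ∑ j ∈ T, p j ^ 2 := Finset.sum_fiberwise _ _ _
      have hCS : (∑ j ∈ T, p j) ^ 2 ≤ (m : ℝ) * ∑ i : Fin m, (ℓ i) ^ 2 := by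
        have h := sq_sum_le_card_mul_sum_sq (s := (univ : Finset (Fin m))) (f := ℓ)
        rw [card_univ, Fintype.card_fin, hl] at h
        exact_mod_cast h
      have htel : ∑ j ∈ T, (p j * S' j + p j ^ 2 / 2) = (∑ j ∈ T, p j) ^ 2 / 2 := by
        have e1 := finSum_le_eq_natSum (fun j => p j * S' j + p j ^ 2 / 2) tn htn
        have e4 := finSum_le_eq_natSum p tn htn
        rw [hTdef, htdef, e1, e4]
        have e2 : ∀ jj ∈ Finset.range (tn + 1),
            (if h : jj < n then p ⟨jj, h⟩ * S' ⟨jj, h⟩ + p ⟨jj, h⟩ ^ 2 / 2 else 0)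
              = ((if h : jj < n then p ⟨jj, h⟩ else 0)
                  * (∑ k ∈ Finset.range jj, if h : k < n then p ⟨k, h⟩ else 0)
                + (if h : jj < n then p ⟨jj, h⟩ else 0) ^ 2 / 2) := by
          intro jj hjj
          have h : jj < n := by
            have := Finset.mem_range.1 hjj; omega
          rw [dif_pos h, dif_pos h]
          have hS : S' ⟨jj, h⟩ = ∑ k ∈ Finset.range jj, if h' : k < n then p ⟨k, h'⟩ else 0 := by
            rw [hS'def]
            exact finSum_lt_eq_natSum p ⟨jj, h⟩
          rw [hS]
        rw [Finset.sum_congr rfl e2, tele_sq]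
      have hQsum : ∑ j ∈ T, p j * Q j ≤ ∑ j ∈ T, p j * D j :=
        Finset.sum_le_sum fun j _ => mul_le_mul_of_nonneg_left (hQD j) (hp j).le
      have hexp : ∑ j ∈ T, p j * e j
          = ∑ j ∈ T, p j * D j - (∑ j ∈ T, p j ^ 2) / 2
            - (1 / (m : ℝ)) * ∑ j ∈ T, (p j * S' j + p j ^ 2 / 2) := by
        rw [Finset.mul_sum, Finset.sum_div, ← Finset.sum_sub_distrib, ← Finset.sum_sub_distrib]
        refine Finset.sum_congr rfl fun j _ => ?_
        rw [hedef]
        ring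
      have hgroup2 : ∑ j ∈ T, p j * Q j
          = ((∑ i : Fin m, (ℓ i) ^ 2) + ∑ j ∈ T, p j ^ 2) / 2 := by
        rw [hgroup, ← hq2, ← Finset.sum_add_distrib, ← Finset.sum_div]
      have hdiv : 0 ≤ (1 / (m : ℝ)) * ((m : ℝ) * (∑ i : Fin m, (ℓ i) ^ 2) - (∑ j ∈ T, p j) ^ 2) :=
        mul_nonneg (by positivity) (by linarith)
      have hdiv2 : (1 / (m : ℝ)) * ((m : ℝ) * (∑ i : Fin m, (ℓ i) ^ 2) - (∑ j ∈ T, p j) ^ 2)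
          = (∑ i : Fin m, (ℓ i) ^ 2) - (1 / (m : ℝ)) * (∑ j ∈ T, p j) ^ 2 := by
        field_simp
      rw [hexp, htel]
      linarith
    -- Abel summation
    have hρ0 : ∀ jj : ℕ, 0 ≤ (if h : jj < n then w ⟨jj, h⟩ / p ⟨jj, h⟩ else 0) := by
      intro jj
      by_cases h : jj < n
      · rw [dif_pos h]; exact div_nonneg (hw _) (hp _).le
      · rw [dif_neg h]
    have hρmono : ∀ j k : ℕ, j ≤ k →
        (if h : k < n then w ⟨k, h⟩ / p ⟨k, h⟩ else 0)
          ≤ (if h : j < n then w ⟨j, h⟩ / p ⟨j, h⟩ else 0) := by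
      intro j k hjk
      by_cases hk : k < n
      · have hj : j < n := lt_of_le_of_lt hjk hk
        rw [dif_pos hk, dif_pos hj]
        exact hsmith ⟨j, hj⟩ ⟨k, hk⟩ hjk
      · rw [dif_neg hk]
        by_cases hj : j < n
        · rw [dif_pos hj]; exact div_nonneg (hw _) (hp _).le
        · rw [dif_neg hj]
    have hpart : ∀ tn : ℕ, tn < n →
        0 ≤ ∑ jj ∈ Finset.range (tn + 1), (if h : jj < n then p ⟨jj, h⟩ * e ⟨jj, h⟩ else 0) := by
      intro tn htn
      rw [← finSum_le_eq_natSum (fun j => p j * e j) tn htn]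
      exact claim tn htn
    have habel := abel_nonneg
      (fun jj => if h : jj < n then p ⟨jj, h⟩ * e ⟨jj, h⟩ else 0) n
      (fun jj => if h : jj < n then w ⟨jj, h⟩ / p ⟨jj, h⟩ else 0)
      hρ0 hρmono hpart
    have hconv : ∑ jj ∈ Finset.range n,
        (if h : jj < n then w ⟨jj, h⟩ / p ⟨jj, h⟩ else 0)
          * (if h : jj < n then p ⟨jj, h⟩ * e ⟨jj, h⟩ else 0)
        = ∑ j, w j * e j := by
      rw [finSum_eq_natSum (fun j => w j * e j)]
      refine Finset.sum_congr rfl fun jj hjj => ?_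
      have h : jj < n := Finset.mem_range.1 hjj
      rw [dif_pos h, dif_pos h, dif_pos h]
      have hpne : p ⟨jj, h⟩ ≠ 0 := (hp _).ne'
      field_simp
    have hfinal : 0 ≤ ∑ j, w j * e j := by rw [← hconv]; exact habel
    have hexp2 : ∑ j, w j * e j
        = E - (1 / 2) * B - (1 / (m : ℝ)) * A' - (1 / (2 * (m : ℝ))) * B := by
      rw [hEdef, hBdef, hA'def, Finset.mul_sum, Finset.mul_sum, Finset.mul_sum,
        ← Finset.sum_sub_distrib, ← Finset.sum_sub_distrib, ← Finset.sum_sub_distrib]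
      refine Finset.sum_congr rfl fun j _ => ?_
      rw [hedef]
      ring
    linarith
  -- Step 4 : OPT lower bound
  have step4 : 2 * φmin * W + E
      ≤ ∑ j, w j * (2 * φ (σ' j) + ∑ k ∈ univ.filter (fun k => σ' k = σ' j ∧ π' k ≤ π' j), p k) := by
    have hcalc : 2 * φmin * W + E = ∑ j, w j * (2 * φmin + D j) := by
      rw [hWdef, hEdef, Finset.mul_sum, ← Finset.sum_add_distrib]
      refine Finset.sum_congr rfl fun j _ => ?_
      ring
    rw [hcalc]
    refine Finset.sum_le_sum fun j _ => ?_
    have h1 : 2 * φmin + D j ≤ 2 * φ (σ' j) + D j := by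
      have := hφge (σ' j); linarith
    have h2 : w j * (2 * φ (σ' j) + D j)
        = w j * (2 * φ (σ' j) + ∑ k ∈ univ.filter (fun k => σ' k = σ' j ∧ π' k ≤ π' j), p k) := rfl
    rw [← h2]
    exact mul_le_mul_of_nonneg_left h1 (hw j)
  -- final combination
  have hR1 : (3 / 2 : ℝ) ≤ R := le_max_left _ _
  have hR2 : φmax / φmin ≤ R := le_max_right _ _
  have hRnn : 0 ≤ R := le_trans (by norm_num) hR1
  have hphimax : 2 * φmax * W ≤ R * (2 * φmin * W) := by
    have h1 : (φmax / φmin) * (2 * φmin * W) ≤ R * (2 * φmin * W) :=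
      mul_le_mul_of_nonneg_right hR2
        (mul_nonneg (mul_nonneg (by norm_num) hφminpos.le) hWnn)
    have h2 : (φmax / φmin) * (2 * φmin * W) = 2 * φmax * W := by
      field_simp
    linarith
  have hRopt : R * (2 * φmin * W + E)
      ≤ R * ∑ j, w j * (2 * φ (σ' j) + ∑ k ∈ univ.filter (fun k => σ' k = σ' j ∧ π' k ≤ π' j), p k) :=
    mul_le_mul_of_nonneg_left step4 hRnn
  have hRsplit : R * (2 * φmin * W + E) = R * (2 * φmin * W) + R * E := mul_add _ _ _
  have hRE : (3 / 2) * E ≤ R * E := mul_le_mul_of_nonneg_right hR1 hEnn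
  have hBm : 0 ≤ (1 / (2 * (m : ℝ))) * B := by positivity
  linarith
end

section
/- Let α > 0, Φ_max ≥ 0, Φ_min ≥ 0, and let w_1,…,w_n ≥ 0 (not all zero) and p_1,…,p_n ≥ p_min ≥ 0 with Φ_min + p_min > 0. Let W_C and W_O be real numbers with W_O ≥ Σ_{j=1}^n w_j·(Φ_min + p_j) and W_C ≤ α·(W_O + Φ_max·Σ_{j=1}^n w_j). Then W_C / W_O ≤ α·(1 + Φ_max·Σ_{j=1}^n w_j / Σ_{j=1}^n w_j·(Φ_min + p_j)) ≤ α·(1 + Φ_max/(Φ_min + p_min)). -/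
open Finset

/-- Arithmetic core of the CosMOS competitive-ratio bound: if `α > 0`,
`Φmax, Φmin, pmin ≥ 0`, `Φmin + pmin > 0`, the weights `w j ≥ 0` are not all zero,
`p j ≥ pmin` for all `j`, `W_O ≥ ∑ j, w j * (Φmin + p j)` and
`W_C ≤ α * (W_O + Φmax * ∑ j, w j)`, then
`W_C / W_O ≤ α * (1 + Φmax * ∑ j, w j / ∑ j, w j * (Φmin + p j))
  ≤ α * (1 + Φmax / (Φmin + pmin))`. -/
theorem cosmos_competitive_ratio (n : ℕ) (α Φmax Φmin pmin WC WO : ℝ)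
    (w p : Fin n → ℝ)
    (hα : 0 < α) (hΦmax : 0 ≤ Φmax) (hΦmin : 0 ≤ Φmin) (hpmin : 0 ≤ pmin)
    (hpos : 0 < Φmin + pmin)
    (hw : ∀ j, 0 ≤ w j) (hw0 : ∃ j, w j ≠ 0)
    (hp : ∀ j, pmin ≤ p j)
    (hWO : ∑ j, w j * (Φmin + p j) ≤ WO)
    (hWC : WC ≤ α * (WO + Φmax * ∑ j, w j)) :
    (WC / WO ≤ α * (1 + Φmax * (∑ j, w j) / ∑ j, w j * (Φmin + p j)))
    ∧ α * (1 + Φmax * (∑ j, w j) / ∑ j, w j * (Φmin + p j))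
        ≤ α * (1 + Φmax / (Φmin + pmin)) := by
  set S := ∑ j, w j with hS
  set T := ∑ j, w j * (Φmin + p j) with hT
  obtain ⟨j0, hj0⟩ := hw0
  have hSpos : 0 < S := by
    have : 0 < w j0 := lt_of_le_of_ne (hw j0) (Ne.symm hj0)
    exact Finset.sum_pos' (fun j _ => hw j) ⟨j0, Finset.mem_univ _, this⟩
  have hTS : (Φmin + pmin) * S ≤ T := by
    rw [hS, hT, Finset.mul_sum]
    apply Finset.sum_le_sum
    intro j _
    rw [mul_comm]
    exact mul_le_mul_of_nonneg_left (by linarith [hp j]) (hw j)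
  have hTpos : 0 < T := lt_of_lt_of_le (by positivity) hTS
  have hWOpos : 0 < WO := lt_of_lt_of_le hTpos hWO
  constructor
  · have h1 : WC / WO ≤ α * (1 + Φmax * S / WO) := by
      rw [div_le_iff₀ hWOpos]
      calc WC ≤ α * (WO + Φmax * S) := hWC
        _ = α * (1 + Φmax * S / WO) * WO := by field_simp
    refine h1.trans ?_
    apply mul_le_mul_of_nonneg_left _ hα.le
    have : Φmax * S / WO ≤ Φmax * S / T :=
      div_le_div_of_nonneg_left (by positivity) hTpos hWO
    linarith
  · apply mul_le_mul_of_nonneg_left _ hα.le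
    have h2 : Φmax * S / T ≤ Φmax / (Φmin + pmin) := by
      rw [div_le_div_iff₀ hTpos hpos]
      calc Φmax * S * (Φmin + pmin) = Φmax * ((Φmin + pmin) * S) := by ring
        _ ≤ Φmax * T := mul_le_mul_of_nonneg_left hTS hΦmax
    linarith
end

section
/- Consider n tasks and m crowd workers, a matrix y with entries y_{ij} ∈ [0,1] satisfying Σ_{i=1}^m y_{ij} = 1 for every task j, total contact times Φ_1,…,Φ_m ≥ 0, processing times p_{ij} ≥ 0, and for each worker i a strict total order ≺_i on the tasks (the priority order). Let σ(1),…,σ(n) be independent random variables where σ(j) takes value i with probability y_{ij}, and define the completion time of task j as C_j = Φ_{σ(j)} + p_{σ(j) j} + Σ over tasks j' ≠ j with σ(j') = σ(j) and j' ≺_{σ(j)} j of p_{σ(j) j'}. Then for every task j and worker i with y_{ij} > 0, the conditional expectation of C_j given σ(j) = i equals Φ_i + p_{ij} + Σ over tasks j' ≠ j with j' ≺_i j of y_{ij'}·p_{ij'}. -/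
open Finset

set_option linter.unusedVariables false

private lemma sum_prod_swap (n m : ℕ) (g : Fin n → Fin m → ℝ) :
    ∑ σ : Fin n → Fin m, ∏ k, g k (σ k) = ∏ k, ∑ a, g k a := by
  rw [Finset.prod_univ_sum]
  simp [Fintype.piFinset_univ]

private lemma marg1 (n m : ℕ) (y : Fin m → Fin n → ℝ) (hysum : ∀ j, ∑ i, y i j = 1)
    (j : Fin n) (i : Fin m) :
    ∑ σ : Fin n → Fin m, (if σ j = i then ∏ k, y (σ k) k else 0) = y i j := by
  have h1 : ∀ σ : Fin n → Fin m,
      (if σ j = i then ∏ k, y (σ k) k else 0)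
        = ∏ k, ((if k = j then (if σ k = i then (1:ℝ) else 0) else 1) * y (σ k) k) := by
    intro σ
    rw [Finset.prod_mul_distrib, Finset.prod_ite_eq' univ j
      (fun k => if σ k = i then (1:ℝ) else 0)]
    simp [ite_mul]
  simp only [h1]
  rw [sum_prod_swap n m (fun k a => (if k = j then (if a = i then (1:ℝ) else 0) else 1) * y a k)]
  have h2 : ∀ k, (∑ a, (if k = j then (if a = i then (1:ℝ) else 0) else 1) * y a k)
      = if k = j then y i k else 1 := by
    intro k
    by_cases hk : k = j <;> simp [hk, ite_mul, hysum k]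
  simp only [h2]
  rw [Finset.prod_ite_eq' univ j (fun k => y i k)]
  simp

private lemma marg2 (n m : ℕ) (y : Fin m → Fin n → ℝ) (hysum : ∀ j, ∑ i, y i j = 1)
    (j j' : Fin n) (hjj : j' ≠ j) (i : Fin m) :
    ∑ σ : Fin n → Fin m, (if σ j = i ∧ σ j' = i then ∏ k, y (σ k) k else 0)
      = y i j * y i j' := by
  have h1 : ∀ σ : Fin n → Fin m,
      (if σ j = i ∧ σ j' = i then ∏ k, y (σ k) k else 0)
        = ∏ k, ((if k = j then (if σ k = i then (1:ℝ) else 0) else 1) *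
            (if k = j' then (if σ k = i then (1:ℝ) else 0) else 1) * y (σ k) k) := by
    intro σ
    rw [Finset.prod_mul_distrib, Finset.prod_mul_distrib,
      Finset.prod_ite_eq' univ j (fun k => if σ k = i then (1:ℝ) else 0),
      Finset.prod_ite_eq' univ j' (fun k => if σ k = i then (1:ℝ) else 0)]
    by_cases h : σ j = i <;> by_cases h' : σ j' = i <;> simp [h, h']
  simp only [h1]
  rw [sum_prod_swap n m (fun k a => (if k = j then (if a = i then (1:ℝ) else 0) else 1) *
    (if k = j' then (if a = i then (1:ℝ) else 0) else 1) * y a k)]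
  have h2 : ∀ k, (∑ a, (if k = j then (if a = i then (1:ℝ) else 0) else 1) *
        (if k = j' then (if a = i then (1:ℝ) else 0) else 1) * y a k)
      = (if k = j then y i k else 1) * (if k = j' then y i k else 1) := by
    intro k
    rcases eq_or_ne k j with hk | hk <;> rcases eq_or_ne k j' with hk' | hk'
    · exact absurd (hk'.symm.trans hk) hjj
    · simp [hk, hk', ite_mul, hjj, Ne.symm hjj]
    · simp [hk, hk', ite_mul, hjj, Ne.symm hjj]
    · simp [hk, hk', hysum k]
  simp only [h2]
  rw [Finset.prod_mul_distrib, Finset.prod_ite_eq' univ j (fun k => y i k),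
    Finset.prod_ite_eq' univ j' (fun k => y i k)]
  simp

/-- Expected completion time under independent rounding.  Tasks `j : Fin n` are assigned
independently to workers `i : Fin m`, task `j` going to worker `i` with probability
`y i j` (so an assignment `σ : Fin n → Fin m` has probability `∏ k, y (σ k) k`).
Given priorities `prec i` (a strict total order on tasks for each worker `i`), the
completion time of task `j` under assignment `σ` is
`C j σ = Φ (σ j) + p (σ j) j + ∑_{j' ≠ j, σ j' = σ j, j' ≺_{σ j} j} p (σ j) j'`.
Then for every task `j` and worker `i` with `y i j > 0`, the conditional expectation
`E[C j ∣ σ j = i] = E[C j · 1_{σ j = i}] / Pr[σ j = i]` equals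
`Φ i + p i j + ∑_{j' ≠ j, j' ≺_i j} y i j' * p i j'`. -/
theorem independent_rounding_conditional_expected_completion_time
    (n m : ℕ) (y : Fin m → Fin n → ℝ) (Φ : Fin m → ℝ) (p : Fin m → Fin n → ℝ)
    (prec : Fin m → Fin n → Fin n → Prop) [∀ i, DecidableRel (prec i)]
    (hprec : ∀ i, IsStrictTotalOrder (Fin n) (prec i))
    (hy0 : ∀ i j, 0 ≤ y i j) (hy1 : ∀ i j, y i j ≤ 1)
    (hysum : ∀ j, ∑ i, y i j = 1)
    (hΦ : ∀ i, 0 ≤ Φ i) (hp : ∀ i j, 0 ≤ p i j)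
    (j : Fin n) (i : Fin m) (hyij : 0 < y i j) :
    (∑ σ : Fin n → Fin m, (∏ k, y (σ k) k) *
        (if σ j = i then
            Φ (σ j) + p (σ j) j +
              ∑ j' ∈ univ.filter (fun j' => j' ≠ j ∧ σ j' = σ j ∧ prec (σ j) j' j),
                p (σ j) j'
          else 0)) / y i j
      = Φ i + p i j +
          ∑ j' ∈ univ.filter (fun j' => j' ≠ j ∧ prec i j' j), y i j' * p i j' := by
  classical
  have hne : y i j ≠ 0 := ne_of_gt hyij
  have hterm : ∀ σ : Fin n → Fin m,
      (∏ k, y (σ k) k) *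
        (if σ j = i then
            Φ (σ j) + p (σ j) j +
              ∑ j' ∈ univ.filter (fun j' => j' ≠ j ∧ σ j' = σ j ∧ prec (σ j) j' j),
                p (σ j) j'
          else 0)
      = (if σ j = i then ∏ k, y (σ k) k else 0) * (Φ i + p i j)
        + ∑ j' ∈ univ.filter (fun j' => j' ≠ j ∧ prec i j' j),
            (if σ j = i ∧ σ j' = i then ∏ k, y (σ k) k else 0) * p i j' := by
    intro σ
    by_cases h : σ j = i
    · simp only [h, if_pos, true_and]
      have hfe : (univ.filter (fun j' => j' ≠ j ∧ σ j' = i ∧ prec i j' j))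
          = (univ.filter (fun j' => j' ≠ j ∧ prec i j' j)).filter (fun j' => σ j' = i) := by
        rw [Finset.filter_filter]
        apply Finset.filter_congr
        intro x _
        tauto
      rw [mul_add, mul_add, Finset.mul_sum]
      congr 1
      rw [hfe, Finset.sum_filter]
      apply Finset.sum_congr rfl
      intro j' _
      by_cases h' : σ j' = i <;> simp [h']
    · simp [h]
  rw [Finset.sum_congr rfl (fun σ _ => hterm σ), Finset.sum_add_distrib,
    ← Finset.sum_mul, marg1 n m y hysum j i, Finset.sum_comm]
  have hinner : ∀ j' ∈ univ.filter (fun j' => j' ≠ j ∧ prec i j' j),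
      (∑ σ : Fin n → Fin m, (if σ j = i ∧ σ j' = i then ∏ k, y (σ k) k else 0) * p i j')
      = y i j * (y i j' * p i j') := by
    intro j' hj'
    rw [← Finset.sum_mul, marg2 n m y hysum j j' (Finset.mem_filter.mp hj').2.1 i]
    ring
  rw [Finset.sum_congr rfl hinner, ← Finset.mul_sum, ← mul_add,
    mul_div_cancel_left₀ _ hne]
end
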